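/- Let V be a k-dimensional subspace of ℝ^d and let ℓ ≥ 1 be a real number. Then there exists a set S ⊆ {1,...,d} of coordinates with |S| ≤ k·ℓ such that for every unit vector v ∈ V and every coordinate i ∉ S, we have |v_i| < 1/√ℓ. -/

import Mathlib

theorem stmt0 (d k : ℕ) (V : Submodule ℝ (EuclideanSpace ℝ (Fin d)))
    (hV : Module.finrank ℝ V = k) (ℓ : ℝ) (hℓ : 1 ≤ ℓ) :
    ∃ S : Finset (Fin d), (S.card : ℝ) ≤ k * ℓ ∧
      ∀ v ∈ V, ‖v‖ = 1 → ∀ i ∉ S, |v i| < 1 / Real.sqrt ℓ := by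
  have hℓ0 : (0:ℝ) < ℓ := lt_of_lt_of_le one_pos hℓ
  haveI : FiniteDimensional ℝ V := FiniteDimensional.finiteDimensional_submodule V
  let o : OrthonormalBasis (Fin k) ℝ V :=
    (stdOrthonormalBasis ℝ V).reindex (finCongr (by rw [hV]))
  let b : Fin k → EuclideanSpace ℝ (Fin d) := fun j => (o j : EuclideanSpace ℝ (Fin d))
  let σ : Fin d → ℝ := fun i => ∑ j, (b j i)^2
  have hσnn : ∀ i, 0 ≤ σ i := fun i => Finset.sum_nonneg (fun j _ => sq_nonneg _)
  have hnormsq : ∀ (n : ℕ) (x : EuclideanSpace ℝ (Fin n)), ‖x‖^2 = ∑ i, (x i)^2 := by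
    intro n x
    rw [EuclideanSpace.norm_eq, Real.sq_sqrt (Finset.sum_nonneg fun i _ => sq_nonneg _)]
    simp [sq_abs]
  have hσsum : ∑ i, σ i = (k : ℝ) := by
    rw [Finset.sum_comm]
    have : ∀ j : Fin k, ∑ i, (b j i)^2 = 1 := by
      intro j
      rw [← hnormsq d]
      have : ‖b j‖ = 1 := by
        have := o.orthonormal.1 j
        exact (Submodule.norm_coe (o j)).trans this
      rw [this]; norm_num
    simp [this]
  refine ⟨Finset.univ.filter (fun i => 1/ℓ ≤ σ i), ?_, ?_⟩
  · have h1 : (Finset.univ.filter (fun i => 1/ℓ ≤ σ i)).card * (1/ℓ)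
        ≤ ∑ i ∈ Finset.univ.filter (fun i => 1/ℓ ≤ σ i), σ i := by
      rw [Finset.card_eq_sum_ones, Nat.cast_sum]
      rw [Finset.sum_mul]
      apply Finset.sum_le_sum
      intro i hi
      simpa using (Finset.mem_filter.mp hi).2
    have h2 : ∑ i ∈ Finset.univ.filter (fun i => 1/ℓ ≤ σ i), σ i ≤ ∑ i, σ i :=
      Finset.sum_le_sum_of_subset_of_nonneg (Finset.filter_subset _ _)
        (fun i _ _ => hσnn i)
    rw [hσsum] at h2
    have := le_trans h1 h2
    calc ((Finset.univ.filter (fun i => 1/ℓ ≤ σ i)).card : ℝ)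
        = ((Finset.univ.filter (fun i => 1/ℓ ≤ σ i)).card * (1/ℓ)) * ℓ := by
          field_simp
      _ ≤ k * ℓ := by nlinarith
  · intro v hv hnorm i hi
    have hσi : σ i < 1/ℓ := by
      simp only [Finset.mem_filter, Finset.mem_univ, true_and, not_le] at hi
      exact hi
    set vv : V := ⟨v, hv⟩ with hvv
    set c : Fin k → ℝ := fun j => o.repr vv j with hc
    have hcsum : ∑ j, (c j)^2 = 1 := by
      have h1 : ‖o.repr vv‖ = ‖vv‖ := o.repr.norm_map vv
      have h2 : ‖vv‖ = 1 := by rw [← Submodule.norm_coe]; exact hnorm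
      have := hnormsq k (o.repr vv)
      rw [h1, h2] at this
      simpa [c] using this.symm
    have hvi : v i = ∑ j, c j * b j i := by
      have hsum := o.sum_repr vv
      have : (vv : EuclideanSpace ℝ (Fin d)) = ∑ j, c j • b j := by
        rw [← hsum]
        push_cast [Submodule.coe_sum]
        rfl
      calc v i = (∑ j, c j • b j) i := congrArg (fun x : EuclideanSpace ℝ (Fin d) => x i) this
        _ = ∑ j, c j * b j i := by
            rw [show ((∑ j, c j • b j : EuclideanSpace ℝ (Fin d)) i)
                = ∑ j, (c j • b j) i from by rw [WithLp.ofLp_sum]; exact Finset.sum_apply i Finset.univ _]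
            simp [smul_eq_mul]
    have hCS : (v i)^2 ≤ σ i := by
      rw [hvi]
      calc (∑ j, c j * b j i)^2 ≤ (∑ j, (c j)^2) * (∑ j, (b j i)^2) :=
            Finset.sum_mul_sq_le_sq_mul_sq Finset.univ c (fun j => b j i)
        _ = σ i := by rw [hcsum]; ring
    have hlt : (v i)^2 < 1/ℓ := lt_of_le_of_lt hCS hσi
    have : |v i| = Real.sqrt ((v i)^2) := (Real.sqrt_sq_eq_abs _).symm
    rw [this]
    have : (1:ℝ) / Real.sqrt ℓ = Real.sqrt (1/ℓ) := by
      rw [one_div, one_div, Real.sqrt_inv]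
    rw [this]
    exact Real.sqrt_lt_sqrt (sq_nonneg _) hlt
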